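/- arXiv:2001.03682 — 3 statements merged into one kernel-verified Lean document; each statement's English description precedes it below -/
import Mathlib

section
/- Let φ be a 2×2 traceless matrix of holomorphic 1-forms on a disk around 0 such that zφ is holomorphic, and suppose the value of zφ at z=0 is nilpotent but nonzero (so det φ has a simple pole at 0). Then there exists a holomorphic gauge transformation g (holomorphic SL(2,ℂ)-valued on a possibly smaller disk) such that g⁻¹φg = [[0,1],[1/z,0]] dz, assuming the coordinate z is chosen so that -det φ = z⁻¹ dz². -/
open Metric Matrix

set_option maxHeartbeats 1000000

/-- Normal form of a strongly parabolic Higgs field near a simple pole of `det φ`.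
`φ = A(z) dz` with `z·A(z) = B(z)` holomorphic, `tr B = 0`, `det A = -1/z`
(i.e. `det B z = -z`, the coordinate being chosen so that `-det φ = z⁻¹ dz²`),
and `B 0` nilpotent and nonzero.  Then on a smaller disk there is a holomorphic
`SL(2,ℂ)`-valued gauge transformation `g` with `g⁻¹ A g = !![0,1; 1/z, 0]`. -/
theorem stmt_0 (r : ℝ) (hr : 0 < r) (A B : ℂ → Matrix (Fin 2) (Fin 2) ℂ)
    (hAB : ∀ z ∈ ball (0 : ℂ) r, z ≠ 0 → A z = z⁻¹ • B z)
    (hBhol : ∀ i j, DifferentiableOn ℂ (fun z => B z i j) (ball (0 : ℂ) r))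
    (htr : ∀ z ∈ ball (0 : ℂ) r, (B z).trace = 0)
    (hdet : ∀ z ∈ ball (0 : ℂ) r, (B z).det = -z)
    (hnilp : B 0 * B 0 = 0) (hne : B 0 ≠ 0) :
    ∃ ε : ℝ, 0 < ε ∧ ε ≤ r ∧ ∃ g : ℂ → Matrix (Fin 2) (Fin 2) ℂ,
      (∀ i j, DifferentiableOn ℂ (fun z => g z i j) (ball (0 : ℂ) ε)) ∧
      (∀ z ∈ ball (0 : ℂ) ε, (g z).det = 1) ∧
      (∀ z ∈ ball (0 : ℂ) ε, z ≠ 0 →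
        (g z)⁻¹ * A z * g z = !![0, 1; z⁻¹, 0]) := by
  have h0r : (0:ℂ) ∈ ball (0:ℂ) r := by simpa using hr
  obtain ⟨i₀, j₀, hij⟩ : ∃ i j, B 0 i j ≠ 0 := by
    by_contra h
    push_neg at h
    exact hne (by ext i j; simpa using h i j)
  obtain ⟨v, hv⟩ : ∃ v' : Fin 2 → ℂ, v' = Pi.single j₀ 1 := ⟨_, rfl⟩
  obtain ⟨w, hw⟩ : ∃ w' : ℂ → Fin 2 → ℂ,
      w' = fun z i => B z i 0 * v 0 + B z i 1 * v 1 := ⟨_, rfl⟩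
  obtain ⟨δ, hδ⟩ : ∃ δ' : ℂ → ℂ, δ' = fun z => v 0 * w z 1 - w z 0 * v 1 := ⟨_, rfl⟩
  -- trace and determinant, entrywise
  have htr' : ∀ z ∈ ball (0:ℂ) r, B z 0 0 + B z 1 1 = 0 := by
    intro z hz
    have := htr z hz; rwa [Matrix.trace_fin_two] at this
  have hdet' : ∀ z ∈ ball (0:ℂ) r, B z 0 0 * B z 1 1 - B z 0 1 * B z 1 0 = -z := by
    intro z hz
    have := hdet z hz; rwa [Matrix.det_fin_two] at this
  -- Cayley–Hamilton: B² = z·I, entrywise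
  have key : ∀ z ∈ ball (0:ℂ) r,
      (B z 0 0 * B z 0 0 + B z 0 1 * B z 1 0 = z) ∧
      (B z 0 0 * B z 0 1 + B z 0 1 * B z 1 1 = 0) ∧
      (B z 1 0 * B z 0 0 + B z 1 1 * B z 1 0 = 0) ∧
      (B z 1 0 * B z 0 1 + B z 1 1 * B z 1 1 = z) := by
    intro z hz
    have ht := htr' z hz
    have hd := hdet' z hz
    refine ⟨?_, ?_, ?_, ?_⟩
    · linear_combination B z 0 0 * ht - hd
    · linear_combination B z 0 1 * ht
    · linear_combination B z 1 0 * ht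
    · linear_combination B z 1 1 * ht - hd
  -- δ 0 ≠ 0
  have hδ0 : δ 0 ≠ 0 := by
    have ht := htr' 0 h0r
    have hd := hdet' 0 h0r
    fin_cases j₀
    · have hδ0eq : δ 0 = B 0 1 0 := by simp [hδ, hw, hv]
      rw [hδ0eq]
      intro h10
      have h00 : B 0 0 0 = 0 := by
        have : B 0 0 0 * B 0 0 0 = 0 := by
          linear_combination B 0 0 0 * ht - hd - B 0 0 1 * h10
        exact mul_self_eq_zero.mp this
      fin_cases i₀ <;> simp_all
    · have hδ0eq : δ 0 = -B 0 0 1 := by simp [hδ, hw, hv]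
      rw [hδ0eq]
      simp only [ne_eq, neg_eq_zero]
      intro h01
      have h11 : B 0 1 1 = 0 := by
        have : B 0 1 1 * B 0 1 1 = 0 := by
          linear_combination B 0 1 1 * ht - hd - B 0 1 0 * h01
        exact mul_self_eq_zero.mp this
      fin_cases i₀ <;> simp_all
  -- differentiability of w and δ
  have hwdiff : ∀ i, DifferentiableOn ℂ (fun z => w z i) (ball (0:ℂ) r) := by
    intro i
    simp only [hw]
    exact ((hBhol i 0).mul_const _).add ((hBhol i 1).mul_const _)
  have hδdiff : DifferentiableOn ℂ δ (ball (0:ℂ) r) := by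
    simp only [hδ]
    exact ((hwdiff 1).const_mul _).sub ((hwdiff 0).mul_const _)
  obtain ⟨u, hu⟩ : ∃ u' : ℂ → ℂ, u' = fun z => δ z / δ 0 := ⟨_, rfl⟩
  have hudiff : DifferentiableOn ℂ u (ball (0:ℂ) r) := by
    rw [hu]; exact hδdiff.div_const _
  have hu0 : u 0 = 1 := by rw [hu]; exact div_self hδ0
  have hc : ContinuousAt u 0 :=
    (hudiff.differentiableAt (isOpen_ball.mem_nhds h0r)).continuousAt
  obtain ⟨ε0, hε0pos, hball⟩ := Metric.continuousAt_iff.mp hc 1 one_pos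
  set ε : ℝ := min ε0 r with hε
  have hεpos : 0 < ε := lt_min hε0pos hr
  have hεr : ε ≤ r := min_le_right _ _
  have hmem : ∀ z ∈ ball (0:ℂ) ε, z ∈ ball (0:ℂ) r := fun z hz =>
    mem_ball.mpr (lt_of_lt_of_le (mem_ball.mp hz) hεr)
  have hnear : ∀ z ∈ ball (0:ℂ) ε, ‖u z - 1‖ < 1 := by
    intro z hz
    have h1 : dist z 0 < ε0 := lt_of_lt_of_le (mem_ball.mp hz) (min_le_left _ _)
    have := hball h1
    rwa [hu0, Complex.dist_eq] at this
  have hslit : ∀ z ∈ ball (0:ℂ) ε, u z ∈ Complex.slitPlane := by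
    intro z hz
    refine Complex.mem_slitPlane_iff.mpr (Or.inl ?_)
    have h1 := hnear z hz
    have h2 : |(u z - 1).re| ≤ ‖u z - 1‖ := Complex.abs_re_le_norm _
    have h3 : (u z).re = (u z - 1).re + 1 := by simp
    rw [h3]
    have h4 := abs_lt.mp (lt_of_le_of_lt h2 h1)
    linarith [h4.1]
  have huz : ∀ z ∈ ball (0:ℂ) ε, u z ≠ 0 :=
    fun z hz => Complex.slitPlane_ne_zero (hslit z hz)
  have hδz : ∀ z ∈ ball (0:ℂ) ε, δ z ≠ 0 := by
    intro z hz h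
    apply huz z hz
    rw [hu]
    simp [h]
  obtain ⟨d, hd⟩ : ∃ d' : ℂ → ℂ, d' = fun z =>
      Complex.exp (Complex.log (δ 0) / 2) * Complex.exp (Complex.log (u z) / 2) := ⟨_, rfl⟩
  have hdne : ∀ z, d z ≠ 0 := by
    intro z; rw [hd]
    exact mul_ne_zero (Complex.exp_ne_zero _) (Complex.exp_ne_zero _)
  have hd2 : ∀ z ∈ ball (0:ℂ) ε, d z * d z = δ z := by
    intro z hz
    have : d z * d z =
        (Complex.exp (Complex.log (δ 0) / 2) * Complex.exp (Complex.log (δ 0) / 2)) *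
        (Complex.exp (Complex.log (u z) / 2) * Complex.exp (Complex.log (u z) / 2)) := by
      rw [hd]; ring
    rw [this, ← Complex.exp_add, ← Complex.exp_add, add_halves, add_halves,
      Complex.exp_log hδ0, Complex.exp_log (huz z hz)]
    rw [hu]
    simp only []
    rw [mul_comm, div_mul_cancel₀ _ hδ0]
  have hddiff : ∀ z ∈ ball (0:ℂ) ε, DifferentiableAt ℂ d z := by
    intro z hz
    have hdz : DifferentiableAt ℂ u z :=
      hudiff.differentiableAt (isOpen_ball.mem_nhds (hmem z hz))
    rw [hd]
    exact (differentiableAt_const _).mul (((hdz.clog (hslit z hz)).div_const 2).cexp)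
  have hwd : ∀ i, ∀ z ∈ ball (0:ℂ) ε, DifferentiableAt ℂ (fun z => w z i) z := by
    intro i z hz
    exact (hwdiff i).differentiableAt (isOpen_ball.mem_nhds (hmem z hz))
  obtain ⟨g, hg⟩ : ∃ g' : ℂ → Matrix (Fin 2) (Fin 2) ℂ, g' = fun z =>
      !![v 0 / d z, w z 0 / d z; v 1 / d z, w z 1 / d z] := ⟨_, rfl⟩
  have hgdet : ∀ z ∈ ball (0:ℂ) ε, (g z).det = 1 := by
    intro z hz
    have h2 : d z * d z = v 0 * w z 1 - w z 0 * v 1 := by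
      rw [hd2 z hz, hδ]
    have hdz := hdne z
    simp only [hg, Matrix.det_fin_two_of]
    field_simp
    linear_combination -h2
  refine ⟨ε, hεpos, hεr, g, ?_, hgdet, ?_⟩
  · intro i j
    intro z hz
    have hdd := hddiff z hz
    have hdz := hdne z
    fin_cases i <;> fin_cases j <;> simp only [hg, Matrix.cons_val', Matrix.cons_val_zero,
      Matrix.cons_val_one, Matrix.head_cons, Matrix.empty_val', Matrix.cons_val_fin_one,
      Matrix.head_fin_const, Matrix.of_apply, Fin.zero_eta, Fin.mk_one]
    · exact ((differentiableAt_const _).div hdd hdz).differentiableWithinAt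
    · exact ((hwd 0 z hz).div hdd hdz).differentiableWithinAt
    · exact ((differentiableAt_const _).div hdd hdz).differentiableWithinAt
    · exact ((hwd 1 z hz).div hdd hdz).differentiableWithinAt
  · intro z hz hz0
    have hzr := hmem z hz
    obtain ⟨k00, k01, k10, k11⟩ := key z hzr
    have hU : IsUnit (g z).det := by rw [hgdet z hz]; exact isUnit_one
    have hdz := hdne z
    have hw0 : B z 0 0 * v 0 + B z 0 1 * v 1 = w z 0 := by simp only [hw]
    have hw1 : B z 1 0 * v 0 + B z 1 1 * v 1 = w z 1 := by simp only [hw]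
    have hBw0 : B z 0 0 * w z 0 + B z 0 1 * w z 1 = z * v 0 := by
      simp only [hw]; linear_combination v 0 * k00 + v 1 * k01
    have hBw1 : B z 1 0 * w z 0 + B z 1 1 * w z 1 = z * v 1 := by
      simp only [hw]; linear_combination v 0 * k10 + v 1 * k11
    have hAg : A z * g z = g z * !![0, 1; z⁻¹, 0] := by
      rw [hAB z hzr hz0]
      ext i k
      fin_cases i <;> fin_cases k <;>
        simp only [hg, Matrix.smul_mul, Matrix.smul_apply, Matrix.mul_apply,
          Fin.sum_univ_two, smul_eq_mul, Matrix.cons_val', Matrix.cons_val_zero,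
          Matrix.cons_val_one, Matrix.head_cons, Matrix.empty_val',
          Matrix.cons_val_fin_one, Matrix.head_fin_const, Matrix.of_apply,
          Fin.zero_eta, Fin.mk_one]
      · field_simp [hz0, hdne z]
        linear_combination hw0
      · field_simp [hz0, hdne z]
        linear_combination hBw0
      · field_simp [hz0, hdne z]
        linear_combination hw1
      · field_simp [hz0, hdne z]
        linear_combination hBw1
    calc (g z)⁻¹ * A z * g z = (g z)⁻¹ * (A z * g z) := by rw [mul_assoc]
      _ = (g z)⁻¹ * (g z * !![0, 1; z⁻¹, 0]) := by rw [hAg]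
      _ = ((g z)⁻¹ * g z) * !![0, 1; z⁻¹, 0] := by rw [mul_assoc]
      _ = !![0, 1; z⁻¹, 0] := by rw [Matrix.nonsing_inv_mul _ hU, one_mul]
end

section
/- Let φ be a 2×2 traceless matrix of meromorphic 1-forms on a disk around 0 with -det φ = σ² z⁻² dz² for some σ ∈ ℂ×, and suppose zφ is holomorphic at 0. Then there exists a holomorphic SL(2,ℂ) gauge transformation g on a neighborhood of 0 such that g⁻¹φg = (σ/z)·diag(1,-1) dz. -/
open Metric Matrix


lemma auxDiag (r : ℝ) (hr : 0 < r) (σ : ℂ) (hσ : σ ≠ 0)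
    (B : ℂ → Matrix (Fin 2) (Fin 2) ℂ)
    (hBhol : ∀ i j, DifferentiableOn ℂ (fun z => B z i j) (ball (0 : ℂ) r))
    (htr : ∀ z ∈ ball (0 : ℂ) r, (B z).trace = 0)
    (hdet : ∀ z ∈ ball (0 : ℂ) r, (B z).det = -σ ^ 2)
    (h0 : σ + B 0 0 0 ≠ 0) :
    ∃ ε : ℝ, 0 < ε ∧ ε ≤ r ∧ ∃ g : ℂ → Matrix (Fin 2) (Fin 2) ℂ,
      (∀ i j, DifferentiableOn ℂ (fun z => g z i j) (ball (0 : ℂ) ε)) ∧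
      (∀ z ∈ ball (0 : ℂ) ε, (g z).det = 1) ∧
      (∀ z ∈ ball (0 : ℂ) ε, B z * g z = g z * !![σ, 0; 0, -σ]) := by
  have h0r : (0 : ℂ) ∈ ball (0 : ℂ) r := by simpa using hr
  have hda : DifferentiableAt ℂ (fun z => B z 0 0) 0 :=
    (hBhol 0 0).differentiableAt (isOpen_ball.mem_nhds h0r)
  have hcont : ContinuousAt (fun z => σ + B z 0 0) 0 :=
    continuousAt_const.add hda.continuousAt
  have hev : ∀ᶠ z in nhds (0 : ℂ), σ + B z 0 0 ≠ 0 ∧ z ∈ ball (0 : ℂ) r :=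
    (hcont.eventually_ne h0).and (isOpen_ball.eventually_mem h0r)
  obtain ⟨δ, hδ, hδP⟩ := Metric.eventually_nhds_iff.mp hev
  have key : ∀ z ∈ ball (0 : ℂ) (min δ r), σ + B z 0 0 ≠ 0 ∧ z ∈ ball (0 : ℂ) r := by
    intro z hz
    exact hδP (lt_of_lt_of_le (by simpa [Metric.mem_ball] using hz) (min_le_left _ _))
  refine ⟨min δ r, lt_min hδ hr, min_le_right _ _,
    fun z => !![σ + B z 0 0, -(B z 0 1) / (2 * σ * (σ + B z 0 0)); B z 1 0, 1 / (2 * σ)],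
    ?_, ?_, ?_⟩
  · have hsub : ball (0 : ℂ) (min δ r) ⊆ ball (0 : ℂ) r := ball_subset_ball (min_le_right _ _)
    intro i j
    fin_cases i <;> fin_cases j
    · simpa using (differentiableOn_const σ).add ((hBhol 0 0).mono hsub)
    · simp only [Matrix.cons_val', Matrix.cons_val_zero, Matrix.cons_val_one, Matrix.head_cons,
        Matrix.empty_val', Matrix.cons_val_fin_one, Matrix.head_fin_const]
      exact ((hBhol 0 1).mono hsub).neg.div
        ((differentiableOn_const _).mul ((differentiableOn_const σ).add ((hBhol 0 0).mono hsub)))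
        (fun z hz => mul_ne_zero (by norm_num [hσ]) (key z hz).1)
    · simpa using (hBhol 1 0).mono hsub
    · simpa using differentiableOn_const _
  · intro z hz
    obtain ⟨hne, hzr⟩ := key z hz
    have ht := htr z hzr
    have hd := hdet z hzr
    rw [Matrix.trace_fin_two] at ht
    rw [Matrix.det_fin_two] at hd
    rw [Matrix.det_fin_two_of]
    field_simp
    linear_combination (B z 0 0) * ht - hd
  · intro z hz
    obtain ⟨hne, hzr⟩ := key z hz
    have ht := htr z hzr
    have hd := hdet z hzr
    rw [Matrix.trace_fin_two] at ht
    rw [Matrix.det_fin_two] at hd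
    ext i j
    fin_cases i <;> fin_cases j <;>
      simp only [Matrix.mul_apply, Fin.sum_univ_two, Matrix.cons_val', Matrix.cons_val_zero,
        Matrix.cons_val_one, Matrix.head_cons, Matrix.empty_val', Matrix.cons_val_fin_one,
        Matrix.head_fin_const, Fin.zero_eta, Fin.mk_one, Matrix.of_apply] <;>
      field_simp <;>
      ring_nf
    · linear_combination (2 * σ * B z 0 0 + 2 * σ ^ 2) * (B z 0 0 * ht - hd)
    · linear_combination 2 * σ * (B z 1 0) * ht
    · linear_combination hd + σ * ht


lemma auxConclude (r ε : ℝ) (hεr : ε ≤ r) (σ : ℂ)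
    (A B g : ℂ → Matrix (Fin 2) (Fin 2) ℂ)
    (hAB : ∀ z ∈ ball (0 : ℂ) r, z ≠ 0 → A z = z⁻¹ • B z)
    (hgdet : ∀ z ∈ ball (0 : ℂ) ε, (g z).det = 1)
    (hgmul : ∀ z ∈ ball (0 : ℂ) ε, B z * g z = g z * !![σ, 0; 0, -σ]) :
    ∀ z ∈ ball (0 : ℂ) ε, z ≠ 0 →
      (g z)⁻¹ * A z * g z = !![σ / z, 0; 0, -(σ / z)] := by
  intro z hz hz0
  have hzr : z ∈ ball (0 : ℂ) r := ball_subset_ball hεr hz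
  have hu : IsUnit (g z).det := by rw [hgdet z hz]; exact isUnit_one
  rw [hAB z hzr hz0]
  calc (g z)⁻¹ * (z⁻¹ • B z) * g z
      = z⁻¹ • ((g z)⁻¹ * (B z * g z)) := by
        rw [Matrix.mul_smul, Matrix.smul_mul, mul_assoc]
    _ = z⁻¹ • ((g z)⁻¹ * g z * !![σ, 0; 0, -σ]) := by rw [hgmul z hz, mul_assoc]
    _ = z⁻¹ • !![σ, 0; 0, -σ] := by rw [Matrix.nonsing_inv_mul _ hu, one_mul]
    _ = !![σ / z, 0; 0, -(σ / z)] := by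
        ext i j
        fin_cases i <;> fin_cases j <;>
          simp [Matrix.smul_apply, div_eq_mul_inv, mul_comm]

/-- Normal form of a weakly parabolic Higgs field near a double pole of `det φ`.
`φ = A(z) dz` with `z·A(z) = B(z)` holomorphic, `tr B = 0`, and
`-det φ = σ² z⁻² dz²`, i.e. `det B z = -σ²` for `σ ∈ ℂ×`.  Then on a smaller
disk there is a holomorphic `SL(2,ℂ)`-valued gauge transformation `g` with
`g⁻¹ A g = (σ/z)·diag(1,-1)`. -/
theorem stmt_1 (r : ℝ) (hr : 0 < r) (σ : ℂ) (hσ : σ ≠ 0)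
    (A B : ℂ → Matrix (Fin 2) (Fin 2) ℂ)
    (hAB : ∀ z ∈ ball (0 : ℂ) r, z ≠ 0 → A z = z⁻¹ • B z)
    (hBhol : ∀ i j, DifferentiableOn ℂ (fun z => B z i j) (ball (0 : ℂ) r))
    (htr : ∀ z ∈ ball (0 : ℂ) r, (B z).trace = 0)
    (hdet : ∀ z ∈ ball (0 : ℂ) r, (B z).det = -σ ^ 2) :
    ∃ ε : ℝ, 0 < ε ∧ ε ≤ r ∧ ∃ g : ℂ → Matrix (Fin 2) (Fin 2) ℂ,
      (∀ i j, DifferentiableOn ℂ (fun z => g z i j) (ball (0 : ℂ) ε)) ∧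
      (∀ z ∈ ball (0 : ℂ) ε, (g z).det = 1) ∧
      (∀ z ∈ ball (0 : ℂ) ε, z ≠ 0 →
        (g z)⁻¹ * A z * g z = !![σ / z, 0; 0, -(σ / z)]) := by
  by_cases h0 : σ + B 0 0 0 ≠ 0
  · obtain ⟨ε, hε, hεr, g, hghol, hgdet, hgmul⟩ := auxDiag r hr σ hσ B hBhol htr hdet h0
    exact ⟨ε, hε, hεr, g, hghol, hgdet, auxConclude r ε hεr σ A B g hAB hgdet hgmul⟩
  · push_neg at h0
    have h0r : (0 : ℂ) ∈ ball (0 : ℂ) r := by simpa using hr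
    have ht0 := htr 0 h0r
    rw [Matrix.trace_fin_two] at ht0
    set B' : ℂ → Matrix (Fin 2) (Fin 2) ℂ :=
      fun z => !![B z 1 1, -(B z 1 0); -(B z 0 1), B z 0 0] with hB'
    have hB'hol : ∀ i j, DifferentiableOn ℂ (fun z => B' z i j) (ball (0 : ℂ) r) := by
      intro i j
      fin_cases i <;> fin_cases j
      · simpa [hB'] using hBhol 1 1
      · simpa [hB'] using (hBhol 1 0).neg
      · simpa [hB'] using (hBhol 0 1).neg
      · simpa [hB'] using hBhol 0 0
    have hB'tr : ∀ z ∈ ball (0 : ℂ) r, (B' z).trace = 0 := by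
      intro z hz
      have h1 := htr z hz
      rw [Matrix.trace_fin_two] at h1
      show Matrix.trace !![B z 1 1, -(B z 1 0); -(B z 0 1), B z 0 0] = 0
      rw [Matrix.trace_fin_two_of]
      linear_combination h1
    have hB'det : ∀ z ∈ ball (0 : ℂ) r, (B' z).det = -σ ^ 2 := by
      intro z hz
      have h1 := hdet z hz
      rw [Matrix.det_fin_two] at h1
      show Matrix.det !![B z 1 1, -(B z 1 0); -(B z 0 1), B z 0 0] = -σ ^ 2
      rw [Matrix.det_fin_two_of]
      linear_combination h1
    have h0' : σ + B' 0 0 0 ≠ 0 := by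
      have : B' 0 0 0 = B 0 1 1 := by simp [hB']
      rw [this]
      have hb11 : B 0 1 1 = σ := by linear_combination ht0 - h0
      rw [hb11]
      intro hcon
      apply hσ
      have : (2 : ℂ) * σ = 0 := by linear_combination hcon
      simpa using this
    obtain ⟨ε, hε, hεr, g', hg'hol, hg'det, hg'mul⟩ :=
      auxDiag r hr σ hσ B' hB'hol hB'tr hB'det h0'
    set g : ℂ → Matrix (Fin 2) (Fin 2) ℂ :=
      fun z => !![-(g' z 1 0), -(g' z 1 1); g' z 0 0, g' z 0 1] with hg
    have hgdet : ∀ z ∈ ball (0 : ℂ) ε, (g z).det = 1 := by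
      intro z hz
      have h1 := hg'det z hz
      rw [Matrix.det_fin_two] at h1
      show Matrix.det !![-(g' z 1 0), -(g' z 1 1); g' z 0 0, g' z 0 1] = 1
      rw [Matrix.det_fin_two_of]
      linear_combination h1
    have hgmul : ∀ z ∈ ball (0 : ℂ) ε, B z * g z = g z * !![σ, 0; 0, -σ] := by
      intro z hz
      have h' := hg'mul z hz
      have e00 := congrFun (congrFun h' 0) 0
      have e01 := congrFun (congrFun h' 0) 1
      have e10 := congrFun (congrFun h' 1) 0
      have e11 := congrFun (congrFun h' 1) 1
      simp [hB', Matrix.mul_apply, Fin.sum_univ_two] at e00 e01 e10 e11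
      ext i j
      fin_cases i <;> fin_cases j <;>
        simp [hg, Matrix.mul_apply, Fin.sum_univ_two]
      · linear_combination -e10
      · linear_combination -e11
      · linear_combination e00
      · linear_combination e01
    refine ⟨ε, hε, hεr, g, ?_, hgdet,
      auxConclude r ε hεr σ A B g hAB hgdet hgmul⟩
    intro i j
    fin_cases i <;> fin_cases j
    · simpa [hg] using (hg'hol 1 0).neg
    · simpa [hg] using (hg'hol 1 1).neg
    · simpa [hg] using hg'hol 0 0
    · simpa [hg] using hg'hol 0 1
end

section
/- Let Φ = [[0, r^{1/2}e^{ℓ}], [z r^{-1/2}e^{-ℓ}, 0]] dz with z = re^{iθ} and ℓ = ℓ(r) real. Then the Hermitian operator γ ↦ -i⋆([Φ* ∧ [Φ,γ]] - [Φ ∧ [Φ*,γ]]) acting on traceless Hermitian 2×2 matrices γ = [[u₀, u₁],[ū₁, -u₀]] has eigenvalues λ₀ = 16r cosh(2ℓ) (on diagonal γ), λ₁ = 8r(cosh(2ℓ) - 1), λ₂ = 8r(cosh(2ℓ) + 1) (on off-diagonal γ). In particular the operator is positive semidefinite, and positive definite whenever ℓ(r) ≠ 0 or r > 0 with cosh(2ℓ)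 > 1. -/
open Matrix

/-- The operator `γ ↦ -i⋆([Φ*∧[Φ,γ]] - [Φ∧[Φ*,γ]])` for `Φ = P dz`,
expressed on matrices as `γ ↦ 2([P†,[P,γ]] + [P,[P†,γ]])`. -/
noncomputable def higgsOp (P γ : Matrix (Fin 2) (Fin 2) ℂ) :
    Matrix (Fin 2) (Fin 2) ℂ :=
  (2 : ℂ) • ((Pᴴ * (P * γ - γ * P) - (P * γ - γ * P) * Pᴴ)
    + (P * (Pᴴ * γ - γ * Pᴴ) - (Pᴴ * γ - γ * Pᴴ) * P))

/-- Traceless Hermitian matrix `[[u₀,u₁],[ū₁,-u₀]]`. -/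
noncomputable def hermMat (u₀ : ℝ) (u₁ : ℂ) : Matrix (Fin 2) (Fin 2) ℂ :=
  !![(u₀ : ℂ), u₁; (starRingEnd ℂ) u₁, -(u₀ : ℂ)]

set_option maxHeartbeats 3200000 in
lemma master (r θ ℓ : ℝ) (hr : 0 < r) (u₀ : ℝ) (u₁ : ℂ) :
    higgsOp (!![0, ((Real.sqrt r : ℝ) : ℂ) * ((Real.exp ℓ : ℝ) : ℂ);
        ((r : ℂ) * Complex.exp ((θ : ℂ) * Complex.I)) / ((Real.sqrt r : ℝ) : ℂ)
          * ((Real.exp (-ℓ) : ℝ) : ℂ), 0]) (hermMat u₀ u₁)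
    = !![((16 * r * Real.cosh (2*ℓ) : ℝ) : ℂ) * u₀,
          ((8 * r * Real.cosh (2*ℓ) : ℝ) : ℂ) * u₁
            - ((8 * r : ℝ) : ℂ) * Complex.exp (-(θ : ℂ) * Complex.I) * (starRingEnd ℂ) u₁;
          ((8 * r * Real.cosh (2*ℓ) : ℝ) : ℂ) * (starRingEnd ℂ) u₁
            - ((8 * r : ℝ) : ℂ) * Complex.exp ((θ : ℂ) * Complex.I) * u₁,
          -(((16 * r * Real.cosh (2*ℓ) : ℝ) : ℂ) * u₀)] := by
  have hs : ((Real.sqrt r : ℝ) : ℂ) * ((Real.sqrt r : ℝ) : ℂ) = (r : ℂ) := by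
    norm_cast; exact Real.mul_self_sqrt hr.le
  have hs0 : ((Real.sqrt r : ℝ) : ℂ) ≠ 0 := by
    norm_cast; exact (Real.sqrt_pos.mpr hr).ne'
  have hz : ((r : ℂ) * Complex.exp ((θ : ℂ) * Complex.I)) / ((Real.sqrt r : ℝ) : ℂ)
      = ((Real.sqrt r : ℝ) : ℂ) * Complex.exp ((θ : ℂ) * Complex.I) := by
    rw [div_eq_iff hs0]; rw [← hs]; ring
  have he : ((Real.exp ℓ : ℝ) : ℂ) * ((Real.exp (-ℓ) : ℝ) : ℂ) = 1 := by
    norm_cast; rw [← Real.exp_add]; simp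
  have hexp : Complex.exp ((θ : ℂ) * Complex.I) * Complex.exp (-((θ : ℂ) * Complex.I)) = 1 := by
    rw [← Complex.exp_add]; ring_nf; exact Complex.exp_zero
  have he' : Complex.exp ((ℓ : ℂ)) * Complex.exp (-(ℓ : ℂ)) = 1 := by
    rw [← Complex.exp_add]; ring_nf; exact Complex.exp_zero
  have hcR : Real.cosh (2*ℓ) = (Real.exp ℓ^2 + Real.exp (-ℓ)^2)/2 := by
    rw [Real.cosh_eq, show (2:ℝ)*ℓ = ℓ+ℓ by ring, show -(ℓ+ℓ) = -ℓ + -ℓ by ring,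
      Real.exp_add, Real.exp_add]; ring
  have hconj : (starRingEnd ℂ) (Complex.exp ((θ:ℂ)*Complex.I))
      = Complex.exp (-(θ:ℂ)*Complex.I) := by
    rw [← Complex.exp_conj]; congr 1
    simp [Complex.conj_I]
  ext i j
  fin_cases i <;> fin_cases j <;>
    simp only [higgsOp, hermMat, hz, Matrix.smul_apply, Matrix.add_apply, Matrix.sub_apply,
      Matrix.mul_apply, Fin.sum_univ_two, Matrix.conjTranspose_apply, Matrix.of_apply,
      Matrix.cons_val', Matrix.cons_val_zero, Matrix.cons_val_one, Matrix.head_cons,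
      Matrix.head_fin_const, Matrix.empty_val', Matrix.cons_val_fin_one, Fin.mk_zero, Fin.mk_one,
      Complex.star_def, _root_.map_mul, Complex.conj_ofReal, hconj, map_zero, star_zero, smul_eq_mul, hcR] <;>
    push_cast <;>
    rw [← hs] <;>
    simp only [neg_mul]
  · linear_combination (8:ℂ)*(u₀:ℂ)*(((Real.sqrt r:ℝ):ℂ))^2*(Complex.exp (-(ℓ:ℂ)))^2*hexp
  · linear_combination (4:ℂ)*u₁*(((Real.sqrt r:ℝ):ℂ))^2*(Complex.exp (-(ℓ:ℂ)))^2*hexp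
      - (8:ℂ)*(((Real.sqrt r:ℝ):ℂ))^2*(Complex.exp (-((θ:ℂ)*Complex.I)))*((starRingEnd ℂ) u₁)*he'
  · linear_combination (4:ℂ)*((starRingEnd ℂ) u₁)*(((Real.sqrt r:ℝ):ℂ))^2*(Complex.exp (-(ℓ:ℂ)))^2*hexp
      - (8:ℂ)*(((Real.sqrt r:ℝ):ℂ))^2*(Complex.exp ((θ:ℂ)*Complex.I))*u₁*he'
  · linear_combination (-8:ℂ)*(u₀:ℂ)*(((Real.sqrt r:ℝ):ℂ))^2*(Complex.exp (-(ℓ:ℂ)))^2*hexp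

lemma htrace (r θ ℓ : ℝ) (hr : 0 < r) (u₀ : ℝ) (u₁ : ℂ) :
    ((higgsOp (!![0, ((Real.sqrt r : ℝ) : ℂ) * ((Real.exp ℓ : ℝ) : ℂ);
        ((r : ℂ) * Complex.exp ((θ : ℂ) * Complex.I)) / ((Real.sqrt r : ℝ) : ℂ)
          * ((Real.exp (-ℓ) : ℝ) : ℂ), 0]) (hermMat u₀ u₁) * hermMat u₀ u₁).trace)
    = ((32 * r * Real.cosh (2*ℓ) * u₀^2 + 16 * r * Real.cosh (2*ℓ) * Complex.normSq u₁
        - 16 * r * (Complex.exp ((θ:ℂ)*Complex.I) * u₁^2).re : ℝ) : ℂ) := by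
  rw [master r θ ℓ hr u₀ u₁]
  have h1 : ((starRingEnd ℂ)) (Complex.exp ((θ:ℂ)*Complex.I) * u₁^2)
      = Complex.exp (-((θ:ℂ)*Complex.I)) * ((starRingEnd ℂ) u₁)^2 := by
    rw [_root_.map_mul, map_pow, ← Complex.exp_conj]
    congr 2
    simp [Complex.conj_I]
  have h2 := Complex.add_conj (Complex.exp ((θ:ℂ)*Complex.I) * u₁^2)
  rw [h1] at h2
  have h3 := Complex.normSq_eq_conj_mul_self (z := u₁)
  simp only [Matrix.trace_fin_two, hermMat, Matrix.mul_apply, Fin.sum_univ_two,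
    Matrix.cons_val', Matrix.cons_val_zero, Matrix.cons_val_one, Matrix.head_cons,
    Matrix.empty_val', Matrix.cons_val_fin_one, Matrix.of_apply, Matrix.vecHead, neg_mul]
  push_cast at h2 ⊢
  linear_combination (-16:ℂ)*(r:ℂ)*Complex.cosh (2*(ℓ:ℂ))*h3 - 8*(r:ℂ)*h2

/-- For the fiducial Higgs field `Φ = [[0, r^{1/2}e^ℓ],[z r^{-1/2}e^{-ℓ},0]] dz`,
`z = re^{iθ}`, the Hermitian operator `-i⋆M_Φ` has eigenvalue
`λ₀ = 16r cosh(2ℓ)` on diagonal matrices, and eigenvalues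
`λ₁ = 8r(cosh(2ℓ)-1)`, `λ₂ = 8r(cosh(2ℓ)+1)` on off-diagonal matrices;
it is positive semidefinite, and positive definite when `cosh(2ℓ) > 1`. -/
theorem stmt_10 (r θ ℓ : ℝ) (hr : 0 < r) :
    let z : ℂ := (r : ℂ) * Complex.exp ((θ : ℂ) * Complex.I)
    let P : Matrix (Fin 2) (Fin 2) ℂ :=
      !![0, ((Real.sqrt r : ℝ) : ℂ) * ((Real.exp ℓ : ℝ) : ℂ);
         z / ((Real.sqrt r : ℝ) : ℂ) * ((Real.exp (-ℓ) : ℝ) : ℂ), 0]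
    (∀ u₀ : ℝ, higgsOp P (hermMat u₀ 0)
        = ((16 * r * Real.cosh (2 * ℓ) : ℝ) : ℂ) • hermMat u₀ 0)
    ∧ (higgsOp P (hermMat 0 (Complex.exp (-((θ : ℂ) / 2) * Complex.I)))
        = ((8 * r * (Real.cosh (2 * ℓ) - 1) : ℝ) : ℂ) •
            hermMat 0 (Complex.exp (-((θ : ℂ) / 2) * Complex.I)))
    ∧ (higgsOp P (hermMat 0 (Complex.I * Complex.exp (-((θ : ℂ) / 2) * Complex.I)))
        = ((8 * r * (Real.cosh (2 * ℓ) + 1) : ℝ) : ℂ) •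
            hermMat 0 (Complex.I * Complex.exp (-((θ : ℂ) / 2) * Complex.I)))
    ∧ (∀ (u₀ : ℝ) (u₁ : ℂ),
        0 ≤ ((higgsOp P (hermMat u₀ u₁) * hermMat u₀ u₁).trace).re)
    ∧ (1 < Real.cosh (2 * ℓ) → ∀ (u₀ : ℝ) (u₁ : ℂ), hermMat u₀ u₁ ≠ 0 →
        0 < ((higgsOp P (hermMat u₀ u₁) * hermMat u₀ u₁).trace).re) := by
  intro z P
  have hconjhalf : (starRingEnd ℂ) (Complex.exp (-((θ : ℂ)/2 * Complex.I)))
      = Complex.exp (((θ : ℂ)/2) * Complex.I) := by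
    rw [← Complex.exp_conj]
    congr 1
    simp only [map_neg, _root_.map_mul, map_div₀, Complex.conj_ofReal, Complex.conj_I,
      map_ofNat]
    ring
  have hXH : Complex.exp ((θ:ℂ) * Complex.I) * Complex.exp (-((θ:ℂ)/2 * Complex.I))
      = Complex.exp (((θ:ℂ)/2) * Complex.I) := by
    rw [← Complex.exp_add]; congr 1; ring
  have hYG : Complex.exp (-((θ:ℂ) * Complex.I)) * Complex.exp (((θ:ℂ)/2) * Complex.I)
      = Complex.exp (-((θ:ℂ)/2 * Complex.I)) := by
    rw [← Complex.exp_add]; congr 1; ring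
  have habs : ∀ u₁ : ℂ, (Complex.exp ((θ:ℂ)*Complex.I) * u₁^2).re ≤ Complex.normSq u₁ := by
    intro u₁
    calc (Complex.exp ((θ:ℂ)*Complex.I) * u₁^2).re
        ≤ ‖Complex.exp ((θ:ℂ)*Complex.I) * u₁^2‖ := Complex.re_le_norm _
      _ = Complex.normSq u₁ := by
          rw [norm_mul, Complex.norm_exp_ofReal_mul_I, one_mul, norm_pow, Complex.sq_norm]
  have hcosh1 : 1 ≤ Real.cosh (2*ℓ) := Real.one_le_cosh _
  refine ⟨?_, ?_, ?_, ?_, ?_⟩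
  · intro u₀
    rw [master r θ ℓ hr u₀ 0]
    ext i j
    fin_cases i <;> fin_cases j <;>
      simp [hermMat, Matrix.smul_apply]
  · rw [master r θ ℓ hr 0 _]
    ext i j
    fin_cases i <;> fin_cases j <;>
      simp only [hermMat, Matrix.smul_apply, Matrix.cons_val', Matrix.cons_val_zero,
        Matrix.cons_val_one, Matrix.head_cons, Matrix.empty_val', Matrix.cons_val_fin_one,
        Matrix.of_apply, Fin.mk_zero, Fin.mk_one, neg_mul, hconjhalf, smul_eq_mul,
        Matrix.vecHead, Complex.ofReal_zero, mul_zero, neg_zero, sub_zero, zero_sub,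
        Fin.isValue] <;>
      push_cast <;>
      first
      | ring1
      | linear_combination (-8:ℂ)*(r:ℂ)*hYG
      | linear_combination (-8:ℂ)*(r:ℂ)*hXH
  · rw [master r θ ℓ hr 0 _]
    ext i j
    fin_cases i <;> fin_cases j <;>
      simp only [hermMat, Matrix.smul_apply, Matrix.cons_val', Matrix.cons_val_zero,
        Matrix.cons_val_one, Matrix.head_cons, Matrix.empty_val', Matrix.cons_val_fin_one,
        Matrix.of_apply, Fin.mk_zero, Fin.mk_one, neg_mul, _root_.map_mul, hconjhalf,
        Complex.conj_I, smul_eq_mul, Matrix.vecHead, Complex.ofReal_zero, mul_zero,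
        neg_zero, sub_zero, zero_sub, Fin.isValue] <;>
      push_cast <;>
      first
      | ring1
      | linear_combination (8:ℂ)*(r:ℂ)*Complex.I*hYG
      | linear_combination (-8:ℂ)*(r:ℂ)*Complex.I*hXH
  · intro u₀ u₁
    rw [htrace r θ ℓ hr u₀ u₁, Complex.ofReal_re]
    have hns : 0 ≤ Complex.normSq u₁ := Complex.normSq_nonneg u₁
    have h4 : (Complex.exp ((θ:ℂ)*Complex.I) * u₁^2).re
        ≤ Real.cosh (2*ℓ) * Complex.normSq u₁ := by
      refine le_trans (habs u₁) ?_
      nlinarith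
    have t1 : 0 ≤ 32*r*Real.cosh (2*ℓ)*u₀^2 := by
      have := mul_nonneg (mul_nonneg hr.le (by linarith : (0:ℝ) ≤ Real.cosh (2*ℓ)))
        (sq_nonneg u₀)
      nlinarith
    have t2 : 0 ≤ 16*r*(Real.cosh (2*ℓ) * Complex.normSq u₁
        - (Complex.exp ((θ:ℂ)*Complex.I) * u₁^2).re) :=
      mul_nonneg (by linarith) (by linarith)
    nlinarith [t1, t2]
  · intro hc u₀ u₁ hne
    rw [htrace r θ ℓ hr u₀ u₁, Complex.ofReal_re]
    have h1 := habs u₁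
    have hns : 0 ≤ Complex.normSq u₁ := Complex.normSq_nonneg u₁
    rcases eq_or_ne u₁ 0 with h | h
    · have hu0 : u₀ ≠ 0 := by
        intro h0
        apply hne
        subst h h0
        ext i j
        fin_cases i <;> fin_cases j <;> simp [hermMat]
      have hu2 : 0 < u₀^2 := by positivity
      subst h
      norm_num
      have : 0 < 32*r*Real.cosh (2*ℓ)*u₀^2 :=
        mul_pos (mul_pos (by linarith) (by linarith)) hu2
      nlinarith
    · have hns2 : 0 < Complex.normSq u₁ := Complex.normSq_pos.mpr h
      have f1 : 0 ≤ 32*r*Real.cosh (2*ℓ)*u₀^2 := by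
        have := mul_nonneg (mul_nonneg hr.le (by linarith : (0:ℝ) ≤ Real.cosh (2*ℓ)))
          (sq_nonneg u₀)
        nlinarith
      have f2 : 0 < 16*r*(Complex.normSq u₁*(Real.cosh (2*ℓ) - 1)) :=
        mul_pos (by linarith) (mul_pos hns2 (by linarith))
      have f3 : 16*r*(Complex.exp ((θ:ℂ)*Complex.I) * u₁^2).re ≤ 16*r*Complex.normSq u₁ := by
        have := mul_le_mul_of_nonneg_left h1 (by linarith : (0:ℝ) ≤ 16*r)
        linarith
      nlinarith [f1, f2, f3]
end
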